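/- Let M(A) be the subcategory of split monomorphisms of a small additive category A, and őĪ : Fct(A,k-Mod) ‚Üí Fct(M(A),k-Mod) the restriction functor. Then őĪ admits a right adjoint ő≤ given by ő≤(X)(a) = Hom_{Fct(M(A),k-Mod)}(őĪ P_a, X), where P_a = k[Hom_A(a,‚ąí)], and the unit F ‚Üí ő≤őĪ(F) is a monomorphism. -/

import Mathlib

open CategoryTheory CategoryTheory.Limits

noncomputable section

variable {A : Type*} [Category A] [Preadditive A] [HasFiniteBiproducts A]
variable {D : Type*} [Category D] [Preadditive D]

/-- `t d : a ↦ a^{⊕(d+1)}` -/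
@[simps] def tFun (A : Type*) [Category A] [Preadditive A] [HasFiniteBiproducts A] (d : ℕ) :
    A ⥤ A where
  obj a := ⨁ (fun _ : Fin (d + 1) => a)
  map f := biproduct.map (fun _ => f)

/-- `u_I : id ⟶ t_d` -/
@[simps] def uNat (A : Type*) [Category A] [Preadditive A] [HasFiniteBiproducts A] (d : ℕ)
    (I : Finset (Fin (d + 1))) : 𝟭 A ⟶ tFun A d where
  app a := biproduct.lift (fun i => if i ∈ I then 𝟙 a else 0)
  naturality a b f := by
    refine biproduct.hom_ext _ _ fun j => ?_
    by_cases h : j ∈ I <;> erw [Category.assoc, Category.assoc, biproduct.lift_π, tFun_map,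
      biproduct.map_π, biproduct.lift_π_assoc] <;> simp [h]

/-- `p_I : t_d ⟶ id` -/
@[simps] def pNat (A : Type*) [Category A] [Preadditive A] [HasFiniteBiproducts A] (d : ℕ)
    (I : Finset (Fin (d + 1))) : tFun A d ⟶ 𝟭 A where
  app a := biproduct.desc (fun i => if i ∈ I then 𝟙 a else 0)
  naturality a b f := by
    refine biproduct.hom_ext' _ _ fun j => ?_
    by_cases h : j ∈ I <;> simp only [Functor.id_map, tFun_map] <;>
      erw [biproduct.ι_map_assoc, biproduct.ι_desc, biproduct.ι_desc_assoc] <;> simp [h]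

/-- the cross effect `cr_d(F) : F ⟶ τ_d F` -/
@[simps] def crNat (d : ℕ) (F : A ⥤ D) : F ⟶ tFun A d ⋙ F where
  app a := ∑ I : Finset (Fin (d + 1)), (-1 : ℤ) ^ I.card • F.map ((uNat A d I).app a)
  naturality a b f := by
    simp only [Functor.comp_map, Preadditive.comp_sum, Preadditive.sum_comp,
      Preadditive.comp_zsmul, Preadditive.zsmul_comp]
    refine Finset.sum_congr rfl (fun I _ => ?_)
    have h := (uNat A d I).naturality f
    simp only [Functor.id_map] at h
    rw [← F.map_comp, ← F.map_comp, h]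

/-- the co-cross effect `cr_d^{op}(F) : τ_d F ⟶ F` -/
@[simps] def crOpNat (d : ℕ) (F : A ⥤ D) : tFun A d ⋙ F ⟶ F where
  app a := ∑ I : Finset (Fin (d + 1)), (-1 : ℤ) ^ I.card • F.map ((pNat A d I).app a)
  naturality a b f := by
    simp only [Functor.comp_map, Preadditive.comp_sum, Preadditive.sum_comp,
      Preadditive.comp_zsmul, Preadditive.zsmul_comp]
    refine Finset.sum_congr rfl (fun I _ => ?_)
    have h := (pNat A d I).naturality f
    simp only [Functor.id_map] at h
    rw [← F.map_comp, ← F.map_comp, h]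

/-- `F` is polynomial of degree at most `d`. -/
def PolyDeg (d : ℕ) (F : A ⥤ D) : Prop := crNat d F = 0

end

section MA

variable (B : Type*) [Category B]

/-- `M(B)` : same objects as `B`, morphisms the split monomorphisms. -/
def MA := B

instance : Category (MA B) where
  Hom a b := {f : (show B from a) ⟶ (show B from b) // IsSplitMono f}
  id a := ⟨𝟙 _, inferInstance⟩
  comp f g := ⟨f.1 ≫ g.1, by haveI := f.2; haveI := g.2; infer_instance⟩
  id_comp f := Subtype.ext (Category.id_comp f.1)
  comp_id f := Subtype.ext (Category.comp_id f.1)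
  assoc f g h := Subtype.ext (Category.assoc f.1 g.1 h.1)

/-- the inclusion `M(B) ⥤ B`. -/
@[simps] def MA.incl : MA B ⥤ B where
  obj a := a
  map f := f.1

/-- `α`, the restriction functor along `M(B) ⥤ B`. -/
def alpha (k : Type) [CommRing k] : (B ⥤ ModuleCat k) ⥤ (MA B ⥤ ModuleCat k) :=
  (Functor.whiskeringLeft (MA B) B (ModuleCat k)).obj (MA.incl B)

end MA

noncomputable section

open Opposite

/-- `P_a = k[Hom_A(a,-)]`. -/
def Pa (k : Type) [CommRing k] {A : Type} [SmallCategory A] (a : A) : A ⥤ ModuleCat k :=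
  coyoneda.obj (op a) ⋙ ModuleCat.free k


section Aux

variable (k : Type) [CommRing k] {A : Type} [SmallCategory A]

/-- free Yoneda: `Hom(P_a, G) ≃ₗ G(a)`. -/
def paHomEquiv (a : A) (G : A ⥤ ModuleCat k) : (Pa k a ⟶ G) ≃ₗ[k] G.obj a where
  toFun η := η.app a (ModuleCat.freeMk (𝟙 a))
  map_add' η ε := rfl
  map_smul' c η := rfl
  invFun x :=
    { app := fun b => ModuleCat.freeDesc (↾(fun f => G.map f x))
      naturality := fun b c g => by
        apply ModuleCat.free_hom_ext
        intro f
        simp [Pa, ModuleCat.free_map_apply, ModuleCat.freeDesc_apply] }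
  left_inv η := by
    apply NatTrans.ext
    funext b
    apply ModuleCat.free_hom_ext
    intro f
    have h := congrArg (fun (t : (Pa k a).obj a ⟶ G.obj b) => t (ModuleCat.freeMk (𝟙 a)))
      (η.naturality f)
    dsimp [Pa] at h ⊢
    have h' : (η.app b) (ModuleCat.freeMk f : (Pa k a).obj b) =
        G.map f ((η.app a) (ModuleCat.freeMk (𝟙 a) : (Pa k a).obj a)) := by
      have hP : (Pa k a).map f (ModuleCat.freeMk (𝟙 a) : (Pa k a).obj a) =
          (ModuleCat.freeMk f : (Pa k a).obj b) :=
        (ModuleCat.free_map_apply (R := k) ((coyoneda.obj (op a)).map f) (𝟙 a)).trans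
          (by simp)
      rw [← hP]
      exact NatTrans.naturality_apply η f _
    erw [ModuleCat.freeDesc_apply]
    exact h'.symm
  right_inv x := by
    show (ModuleCat.freeDesc (↾fun f => (G.map f) x)) (ModuleCat.freeMk (𝟙 a)) = x
    rw [ModuleCat.freeDesc_apply]
    simp

lemma alpha_map_add' {F G : A ⥤ ModuleCat k} (g g' : F ⟶ G) :
    (alpha A k).map (g + g') = (alpha A k).map g + (alpha A k).map g' := by
  apply NatTrans.ext
  funext b
  simp [alpha, NatTrans.app_add]
  rfl

lemma alpha_map_smul' {F G : A ⥤ ModuleCat k} (c : k) (g : F ⟶ G) :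
    (alpha A k).map (c • g) = c • (alpha A k).map g := by
  apply NatTrans.ext
  funext b
  simp [alpha, NatTrans.app_smul]
  rfl

/-- linearized hom-equiv of an adjunction `alpha ⊣ β`. -/
def e2 {β : (MA A ⥤ ModuleCat k) ⥤ (A ⥤ ModuleCat k)} (adj : alpha A k ⊣ β)
    (X : MA A ⥤ ModuleCat k) (F : A ⥤ ModuleCat k) :
    (F ⟶ β.obj X) ≃ₗ[k] ((alpha A k).obj F ⟶ X) where
  toFun := (adj.homEquiv F X).symm
  invFun := adj.homEquiv F X
  left_inv := (adj.homEquiv F X).symm.left_inv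
  right_inv := (adj.homEquiv F X).symm.right_inv
  map_add' g g' := by
    simp only [Adjunction.homEquiv_counit, alpha_map_add', Preadditive.add_comp]
  map_smul' c g := by
    simp only [Adjunction.homEquiv_counit, alpha_map_smul', Linear.smul_comp, RingHom.id_apply]

instance : (alpha A k).Faithful where
  map_injective {F G η ε} h := by
    apply NatTrans.ext
    funext b
    have h2 := congrArg (fun (t : (alpha A k).obj F ⟶ (alpha A k).obj G) => t.app b) h
    exact h2

end Aux

/-- The restriction `α` to split monomorphisms has a right adjoint `β` given by
`β(X)(a) = Hom(α P_a, X)`, and the unit of the adjunction is a monomorphism. -/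
theorem stmt13 (k : Type) [CommRing k] (A : Type) [SmallCategory A] [Preadditive A]
    [HasFiniteBiproducts A] :
    ∃ (β : (MA A ⥤ ModuleCat k) ⥤ (A ⥤ ModuleCat k)) (adj : alpha A k ⊣ β),
      (∀ (X : MA A ⥤ ModuleCat k) (a : A),
        Nonempty (((β.obj X).obj a) ≃ₗ[k] ((alpha A k).obj (Pa k a) ⟶ X))) ∧
      (∀ F : A ⥤ ModuleCat k, Mono (adj.unit.app F)) := by
  have adj : alpha A k ⊣ (MA.incl A).ran := (MA.incl A).ranAdjunction (ModuleCat k)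
  refine ⟨(MA.incl A).ran, adj, fun X a =>
    ⟨((paHomEquiv k a _).symm).trans (e2 k adj X (Pa k a))⟩, fun F => inferInstance⟩

end
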